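/- Let R be a commutative ring and X an abelian group, and let ξ : X → Line_R be a monoidal assignment of free rank-one R-modules, meaning we are given an extension of abelian groups 1 → R^× → P → X → 1. Then the commutative ring ℤ[P] ⊗_{ℤ[R^×]} R (the pushout of ℤ[R^×] → R along ℤ[R^×] → ℤ[P] in commutative rings) is a free R-module with basis in bijection with X. -/

import Mathlib

open TensorProduct

section

variable (R : Type) [CommRing R]

/-- The group ring `ℤ[Rˣ]` of the group of units of `R`. -/
abbrev UnitsGroupRing := MonoidAlgebra ℤ Rˣ

/-- `R` is an algebra over `ℤ[Rˣ]` via the ring map `ℤ[Rˣ] → R` induced by the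
inclusion of the units `Rˣ → R`. -/
noncomputable def unitsAlgHom : UnitsGroupRing R →ₐ[ℤ] R :=
  MonoidAlgebra.lift ℤ R Rˣ (Units.coeHom R)

noncomputable instance : Module (UnitsGroupRing R) R :=
  Module.compHom R (unitsAlgHom R).toRingHom

instance : SMulCommClass (UnitsGroupRing R) R R :=
  ⟨fun a r' r => by
    show (unitsAlgHom R) a * (r' * r) = r' * ((unitsAlgHom R) a * r)
    ring⟩

variable (P : Type) [CommGroup P] (ι : Rˣ →* P)

/-- A type synonym for the group ring `ℤ[P]`, regarded as a module over `ℤ[Rˣ]`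
via the ring homomorphism `ℤ[Rˣ] → ℤ[P]` induced by `ι : Rˣ →* P`. -/
@[nolint unusedArguments]
def ExtGroupRing (_ : Rˣ →* P) : Type := MonoidAlgebra ℤ P

noncomputable instance : AddCommGroup (ExtGroupRing R P ι) :=
  inferInstanceAs (AddCommGroup (MonoidAlgebra ℤ P))

noncomputable instance : Module (UnitsGroupRing R) (ExtGroupRing R P ι) :=
  Module.compHom (MonoidAlgebra ℤ P) (MonoidAlgebra.mapDomainRingHom ℤ ι)

end

/-- `R` is an algebra over `ℤ[Rˣ]` (with the same scalar action as the module
structure above). -/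
noncomputable instance (R : Type) [CommRing R] : Algebra (UnitsGroupRing R) R :=
  Algebra.ofModule
    (fun a x y => by
      show ((unitsAlgHom R) a * x) * y = (unitsAlgHom R) a * (x * y)
      ring)
    (fun a x y => by
      show x * ((unitsAlgHom R) a * y) = (unitsAlgHom R) a * (x * y)
      ring)

@[elab_as_elim]
lemma extGroupRing_induction_linear {R : Type} [CommRing R] {P : Type} [CommGroup P]
    {ι : Rˣ →* P} {motive : ExtGroupRing R P ι → Prop} (x : ExtGroupRing R P ι)
    (zero : motive 0) (add : ∀ x y, motive x → motive y → motive (x + y))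
    (single : ∀ p n, motive (show ExtGroupRing R P ι from MonoidAlgebra.single p n)) : motive x :=
  MonoidAlgebra.induction_linear (motive := motive) x zero add single

section AuxProof

variable {R : Type} [CommRing R] {X : Type} [CommGroup X]
    {P : Type} [CommGroup P] (ι : Rˣ →* P) (π : P →* X) (s : X → P) (w : P → Rˣ)

/-- The scalar action of `ℤ[Rˣ]` on `ℤ[P]`, unfolded. -/
lemma extSmul_def (a : UnitsGroupRing R) (m : ExtGroupRing R P ι) :
    a • m = (show ExtGroupRing R P ι from
      (MonoidAlgebra.mapDomainRingHom ℤ ι a) * (show MonoidAlgebra ℤ P from m)) := rfl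

/-- The underlying function of the representation map `ℤ[P] → (X →₀ ℤ[Rˣ])`. -/
noncomputable def rhoFun : ExtGroupRing R P ι → (X →₀ UnitsGroupRing R) :=
  fun m => (show MonoidAlgebra ℤ P from m).coeff.sum
    fun p n => Finsupp.single (π p) (MonoidAlgebra.single (w p) n)

lemma rhoFun_single (p : P) (n : ℤ) :
    rhoFun ι π w (show ExtGroupRing R P ι from MonoidAlgebra.single p n)
      = Finsupp.single (π p) (MonoidAlgebra.single (w p) n) :=
  Finsupp.sum_single_index (by simp)

lemma rhoFun_zero : rhoFun ι π w 0 = 0 :=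
  Finsupp.sum_zero_index

lemma rhoFun_add (m m' : ExtGroupRing R P ι) :
    rhoFun ι π w (m + m') = rhoFun ι π w m + rhoFun ι π w m' :=
  by
  classical
  exact Finsupp.sum_add_index (by simp)
    (fun p _ n n' => by simp [MonoidAlgebra.single_add, Finsupp.single_add])

lemma rhoFun_smul (hπι : ∀ v : Rˣ, π (ι v) = 1)
    (hwmul : ∀ (v : Rˣ) (p : P), w (ι v * p) = v * w p)
    (a : UnitsGroupRing R) (m : ExtGroupRing R P ι) :
    rhoFun ι π w (a • m) = a • rhoFun ι π w m := by
  induction a using MonoidAlgebra.induction_linear with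
  | zero => rw [zero_smul, zero_smul, rhoFun_zero]
  | add a b ha hb => rw [add_smul, rhoFun_add, ha, hb, add_smul]
  | single v k =>
      induction m using extGroupRing_induction_linear with
      | zero => rw [smul_zero, rhoFun_zero, smul_zero]
      | add f g hf hg => rw [smul_add, rhoFun_add, hf, hg, rhoFun_add, smul_add]
      | single p n =>
          rw [extSmul_def]
          have h1 : (MonoidAlgebra.mapDomainRingHom ℤ ι) (MonoidAlgebra.single v k)
              = MonoidAlgebra.single (ι v) k := MonoidAlgebra.mapDomain_single
          rw [show (show ExtGroupRing R P ι from
              (MonoidAlgebra.mapDomainRingHom ℤ ι (MonoidAlgebra.single v k)) *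
              (show MonoidAlgebra ℤ P from MonoidAlgebra.single p n))
            = (show ExtGroupRing R P ι from MonoidAlgebra.single (ι v * p) (k * n)) by
              rw [h1, MonoidAlgebra.single_mul_single]]
          rw [rhoFun_single, rhoFun_single]
          rw [map_mul, hπι, one_mul, hwmul, Finsupp.smul_single]
          congr 1
          rw [smul_eq_mul, MonoidAlgebra.single_mul_single]

variable (R P)

/-- The representation map `ℤ[P] → (X →₀ ℤ[Rˣ])` as a `ℤ[Rˣ]`-linear map. -/
noncomputable def rhoL (hπι : ∀ v : Rˣ, π (ι v) = 1)
    (hwmul : ∀ (v : Rˣ) (p : P), w (ι v * p) = v * w p) :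
    ExtGroupRing R P ι →ₗ[UnitsGroupRing R] (X →₀ UnitsGroupRing R) where
  toFun := rhoFun ι π w
  map_add' := rhoFun_add ι π w
  map_smul' := rhoFun_smul ι π w hπι hwmul

/-- The inverse map `(X →₀ ℤ[Rˣ]) → ℤ[P]` as a `ℤ[Rˣ]`-linear map. -/
noncomputable def sigmaL : (X →₀ UnitsGroupRing R) →ₗ[UnitsGroupRing R] ExtGroupRing R P ι :=
  Finsupp.lsum ℕ fun x => LinearMap.toSpanSingleton (UnitsGroupRing R) (ExtGroupRing R P ι)
    (show ExtGroupRing R P ι from MonoidAlgebra.single (s x) 1)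

end AuxProof

/-- Let `R` be a commutative ring and `X` an abelian group, and suppose
given a monoidal assignment of `R`-lines to `X`, i.e. an extension of abelian groups
`1 → Rˣ → P → X → 1` (with `ι : Rˣ →* P` injective, `π : P →* X` surjective, and the
image of `ι` equal to the kernel of `π`).  Then the commutative ring
`ℤ[P] ⊗_{ℤ[Rˣ]} R` (the pushout of `ℤ[Rˣ] → R` along `ℤ[Rˣ] → ℤ[P]` in commutative
rings, written here as `R ⊗_{ℤ[Rˣ]} ℤ[P]`) is a free `R`-module with basis in
bijection with `X`, i.e. it is isomorphic as an `R`-module to `X →₀ R`. -/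
theorem pushout_free_on_X (R : Type) [CommRing R] (X : Type) [CommGroup X]
    (P : Type) [CommGroup P] (ι : Rˣ →* P) (π : P →* X)
    (hι : Function.Injective ι) (hπ : Function.Surjective π)
    (hexact : ∀ p : P, π p = 1 ↔ p ∈ Set.range ι) :
    Nonempty ((R ⊗[UnitsGroupRing R] ExtGroupRing R P ι) ≃ₗ[R] (X →₀ R)) := by
  classical
  choose s hs using hπ
  have hπι : ∀ v : Rˣ, π (ι v) = 1 := fun v => (hexact _).mpr ⟨v, rfl⟩
  have hw : ∀ p : P, ∃ v : Rˣ, ι v = p * (s (π p))⁻¹ := by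
    intro p
    have : π (p * (s (π p))⁻¹) = 1 := by
      rw [map_mul, map_inv, hs, mul_inv_eq_one]
    obtain ⟨v, hv⟩ := (hexact _).mp this
    exact ⟨v, hv⟩
  choose w hwspec using hw
  have hw1 : ∀ p : P, ι (w p) * s (π p) = p := fun p => by
    rw [hwspec]; group
  have hws : ∀ x : X, w (s x) = 1 := fun x => hι (by
    rw [hwspec, map_one, hs, mul_inv_cancel])
  have hwmul : ∀ (v : Rˣ) (p : P), w (ι v * p) = v * w p := fun v p => hι (by
    rw [hwspec, map_mul, hπι, one_mul, map_mul, hwspec]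
    group)
  -- the `ℤ[Rˣ]`-linear equivalence `ℤ[P] ≃ (X →₀ ℤ[Rˣ])`
  have h2 : (sigmaL R P ι s).comp (rhoL R P ι π w hπι hwmul) = LinearMap.id := by
    apply LinearMap.ext
    intro m
    induction m using extGroupRing_induction_linear with
    | zero => simp
    | add f g hf hg => simp only [map_add, hf, hg, LinearMap.id_coe, id_eq]
    | single p n =>
        show sigmaL R P ι s (rhoFun ι π w _) = _
        rw [rhoFun_single]
        show (Finsupp.lsum ℕ _) _ = _
        rw [Finsupp.lsum_single, LinearMap.toSpanSingleton_apply, extSmul_def]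
        show (show ExtGroupRing R P ι from _) = _
        rw [show (MonoidAlgebra.mapDomainRingHom ℤ ι) (MonoidAlgebra.single (w p) n)
            = MonoidAlgebra.single (ι (w p)) n from MonoidAlgebra.mapDomain_single,
          MonoidAlgebra.single_mul_single, mul_one, hw1]
        rfl
  have h1 : (rhoL R P ι π w hπι hwmul).comp (sigmaL R P ι s) = LinearMap.id := by
    apply Finsupp.lhom_ext
    intro x a
    show rhoL R P ι π w hπι hwmul ((Finsupp.lsum ℕ _) _) = _
    rw [Finsupp.lsum_single, LinearMap.toSpanSingleton_apply, map_smul]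
    show a • rhoFun ι π w _ = _
    rw [rhoFun_single, hs, hws, Finsupp.smul_single]
    congr 1
    rw [smul_eq_mul, ← MonoidAlgebra.one_def, mul_one]
  let E : ExtGroupRing R P ι ≃ₗ[UnitsGroupRing R] (X →₀ UnitsGroupRing R) :=
    LinearEquiv.ofLinear (rhoL R P ι π w hπι hwmul) (sigmaL R P ι s) h1 h2
  let b : Module.Basis X (UnitsGroupRing R) (ExtGroupRing R P ι) := Module.Basis.ofRepr E
  exact ⟨(b.baseChange R).repr⟩
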